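/- Let A, B ∈ ℝ³ be linearly independent and define V : ℝ → ℝ³ by V(t) := exp(−t·ad(B))(A) + B, where ad(B) : ℝ³ → ℝ³ is the linear map w ↦ B × w and exp denotes the exponential of a continuous linear endomorphism of ℝ³. Then there exists a constant C ∈ ℝ³ with V''(t) = V'(t) × V(t) + C for all t ∈ ℝ if and only if ⟨A, B⟩ = 0. (Equivalently: the pointwise product t ↦ exp(tA)exp(tB) of two one-parameter subgroups of SO(3) is a Riemannian cubic if and only if A is orthogonal to B.) -/

import Mathlib

noncomputable section
open scoped RealInnerProductSpace

/-- `ℝ³` with the Euclidean inner product. -/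
abbrev E3 : Type := EuclideanSpace ℝ (Fin 3)

/-- The cross product on `ℝ³`; with `⁅u,v⁆ := cross u v`, `ℝ³` is the Lie algebra `so(3)`. -/
def cross (u v : E3) : E3 :=
  (WithLp.equiv 2 (Fin 3 → ℝ)).symm
    ![u 1 * v 2 - u 2 * v 1, u 2 * v 0 - u 0 * v 2, u 0 * v 1 - u 1 * v 0]

/-- `ad(B) : ℝ³ → ℝ³`, `w ↦ B × w`, as a continuous linear endomorphism of `ℝ³`. -/
def adL (B : E3) : E3 →L[ℝ] E3 :=
  LinearMap.toContinuousLinearMap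
    { toFun := fun w => cross B w
      map_add' := by
        intro x y
        ext i
        fin_cases i <;>
          simp [cross, WithLp.equiv_symm_apply, PiLp.add_apply] <;> ring
      map_smul' := by
        intro c x
        ext i
        fin_cases i <;>
          simp [cross, WithLp.equiv_symm_apply, PiLp.smul_apply, smul_eq_mul] <;> ring }

lemma adL_apply (B w : E3) : adL B w = cross B w := rfl

lemma inner_cross_left (B w : E3) : ⟪cross B w, B⟫ = 0 := by
  simp [cross, PiLp.inner_apply, RCLike.inner_apply, Fin.sum_univ_three,
    WithLp.equiv_symm_apply]
  ring

lemma inner_cross_right (B w : E3) : ⟪cross B w, w⟫ = 0 := by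
  simp [cross, PiLp.inner_apply, RCLike.inner_apply, Fin.sum_univ_three,
    WithLp.equiv_symm_apply]
  ring

lemma key_id (B w : E3) :
    (-(adL B)) ((-(adL B)) w) = cross ((-(adL B)) w) (w + B) + (⟪w, B⟫ • w - ⟪w, w⟫ • B) := by
  simp only [ContinuousLinearMap.neg_apply, adL_apply]
  ext i
  fin_cases i <;>
    simp [cross, PiLp.inner_apply, RCLike.inner_apply, Fin.sum_univ_three,
      WithLp.equiv_symm_apply, PiLp.add_apply, PiLp.sub_apply, PiLp.smul_apply,
      PiLp.neg_apply, smul_eq_mul, EuclideanSpace.norm_sq_eq] <;> ring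

lemma cross_dep (A B : E3) (h : cross B A = 0) : ⟪B, B⟫ • A + (-⟪A, B⟫) • B = 0 := by
  have hi : ∀ i, cross B A i = 0 := fun i => by rw [h]; rfl
  have h0 := hi 0; have h1 := hi 1; have h2 := hi 2
  simp only [cross, WithLp.equiv_symm_apply, WithLp.ofLp_toLp, Matrix.cons_val_zero, Matrix.cons_val_one,
    Matrix.head_cons, Matrix.cons_val_two, Matrix.tail_cons] at h0 h1 h2
  ext i
  fin_cases i
  · simp [PiLp.inner_apply, RCLike.inner_apply, Fin.sum_univ_three, EuclideanSpace.norm_sq_eq]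
    linear_combination (-(B 1)) * h2 + (B 2) * h1
  · simp [PiLp.inner_apply, RCLike.inner_apply, Fin.sum_univ_three, EuclideanSpace.norm_sq_eq]
    linear_combination (B 0) * h2 + (-(B 2)) * h0
  · simp [PiLp.inner_apply, RCLike.inner_apply, Fin.sum_univ_three, EuclideanSpace.norm_sq_eq]
    linear_combination (-(B 0)) * h1 + (B 1) * h0

/-- For linearly independent `A, B ∈ ℝ³`, the curve `V(t) = exp(−t·ad(B))(A) + B` (the left
Lie reduction of `t ↦ exp(tA)exp(tB)` in `SO(3)`) is a Lie quadratic, i.e. satisfies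
`V'' = V' × V + C` for some constant `C`, if and only if `⟨A, B⟩ = 0`. -/
theorem stmt_4 (A B : E3) (hAB : LinearIndependent ℝ ![A, B]) :
    (∃ C : E3, ∀ t : ℝ,
        iteratedDeriv 2 (fun s : ℝ => NormedSpace.exp (-(s • adL B)) A + B) t =
          cross (deriv (fun s : ℝ => NormedSpace.exp (-(s • adL B)) A + B) t)
              (NormedSpace.exp (-(t • adL B)) A + B) + C) ↔
      ⟪A, B⟫ = 0 := by
  set N : E3 →L[ℝ] E3 := -(adL B) with hN
  have hsm : ∀ s : ℝ, -(s • adL B) = s • N := fun s => by rw [hN, smul_neg]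
  set W : ℝ → E3 := fun t => NormedSpace.exp (t • N) A with hWdef
  have hVeq : (fun s : ℝ => NormedSpace.exp (-(s • adL B)) A + B) = fun s => W s + B := by
    funext s; rw [hsm s]
  have hW : ∀ t, HasDerivAt W (N (W t)) t := by
    intro t
    have h1 := hasDerivAt_exp_smul_const' (𝕂 := ℝ) N t
    have h2 := (ContinuousLinearMap.apply ℝ E3 A).hasFDerivAt.comp_hasDerivAt t h1
    exact h2
  have hV : ∀ t, HasDerivAt (fun s : ℝ => NormedSpace.exp (-(s • adL B)) A + B) (N (W t)) t := by
    intro t; rw [hVeq]; exact (hW t).add_const B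
  have hderivV : deriv (fun s : ℝ => NormedSpace.exp (-(s • adL B)) A + B) = fun t => N (W t) :=
    funext fun t => (hV t).deriv
  have hV2 : ∀ t, iteratedDeriv 2 (fun s : ℝ => NormedSpace.exp (-(s • adL B)) A + B) t
      = N (N (W t)) := by
    intro t
    rw [show (2 : ℕ) = 1 + 1 from rfl, iteratedDeriv_succ, iteratedDeriv_one, hderivV]
    exact (N.hasFDerivAt.comp_hasDerivAt t (hW t)).deriv
  have hW0 : W 0 = A := by
    show NormedSpace.exp ((0 : ℝ) • N) A = A
    rw [zero_smul ℝ N, NormedSpace.exp_zero]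
    rfl
  -- invariants
  have hNB : ∀ w : E3, ⟪N w, B⟫ = 0 := by
    intro w; rw [hN]
    simp only [ContinuousLinearMap.neg_apply, adL_apply, inner_neg_left, inner_cross_left, neg_zero]
  have hNw : ∀ w : E3, ⟪N w, w⟫ = 0 := by
    intro w; rw [hN]
    simp only [ContinuousLinearMap.neg_apply, adL_apply, inner_neg_left, inner_cross_right, neg_zero]
  have hinner1 : ∀ t, ⟪W t, B⟫ = ⟪A, B⟫ := by
    intro t
    have hg : ∀ s, HasDerivAt (fun u => ⟪W u, B⟫) 0 s := by
      intro s
      have := HasDerivAt.inner ℝ (hW s) (hasDerivAt_const s B)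
      simpa [hNB] using this
    have := is_const_of_deriv_eq_zero (f := fun u => ⟪W u, B⟫)
      (fun x => (hg x).differentiableAt) (fun x => (hg x).deriv) t 0
    rw [this, hW0]
  have hinner2 : ∀ t, ⟪W t, W t⟫ = ⟪A, A⟫ := by
    intro t
    have hg : ∀ s, HasDerivAt (fun u => ⟪W u, W u⟫) 0 s := by
      intro s
      have := HasDerivAt.inner ℝ (hW s) (hW s)
      have h2 : ⟪W s, N (W s)⟫ = 0 := by rw [real_inner_comm]; exact hNw _
      simpa [hNw, h2] using this
    have := is_const_of_deriv_eq_zero (f := fun u => ⟪W u, W u⟫)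
      (fun x => (hg x).differentiableAt) (fun x => (hg x).deriv) t 0
    rw [this, hW0]
  have hmain : ∀ t, iteratedDeriv 2 (fun s : ℝ => NormedSpace.exp (-(s • adL B)) A + B) t
      = cross (deriv (fun s : ℝ => NormedSpace.exp (-(s • adL B)) A + B) t)
          (NormedSpace.exp (-(t • adL B)) A + B) + (⟪A, B⟫ • W t - ⟪A, A⟫ • B) := by
    intro t
    rw [hV2 t, hderivV, hsm t, ← hinner1 t, ← hinner2 t]
    exact key_id B (W t)
  constructor
  · rintro ⟨C, hC⟩
    have hconst : ∀ t, ⟪A, B⟫ • W t - ⟪A, A⟫ • B = C := by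
      intro t
      have h1 := hC t
      rw [hmain t] at h1
      exact (add_right_inj _).mp h1
    have h0 : ⟪A, B⟫ • N (W 0) = 0 := by
      have hF : HasDerivAt (fun u => ⟪A, B⟫ • W u - ⟪A, A⟫ • B) (⟪A, B⟫ • N (W 0)) 0 :=
        by have := ((hW 0).const_smul ⟪A, B⟫).sub_const (⟪A, A⟫ • B); exact this
      have h2 : HasDerivAt (fun u : ℝ => ⟪A, B⟫ • W u - ⟪A, A⟫ • B) 0 0 := by
        have he : (fun u : ℝ => ⟪A, B⟫ • W u - ⟪A, A⟫ • B) = fun _ => C := funext hconst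
        rw [he]; exact hasDerivAt_const 0 C
      exact hF.unique h2
    rw [hW0] at h0
    have h0' : ⟪A, B⟫ • cross B A = 0 := by
      have : N A = -(cross B A) := by rw [hN]; simp [adL_apply]
      rw [this, smul_neg, neg_eq_zero] at h0
      exact h0
    by_contra hne
    have hcr : cross B A = 0 := by
      rcases smul_eq_zero.mp h0' with h | h
      · exact absurd h hne
      · exact h
    have hdep := cross_dep A B hcr
    have := (LinearIndependent.pair_iff.mp hAB) _ _ hdep
    have hBB : ⟪B, B⟫ = (0 : ℝ) := this.1
    have hB0 : B = 0 := inner_self_eq_zero.mp hBB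
    exact hAB.ne_zero 1 (by simpa using hB0)
  · intro h
    refine ⟨-(⟪A, A⟫ • B), fun t => ?_⟩
    rw [hmain t, h, zero_smul, zero_sub]
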